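/- Strengthened Expansion for distributive lattices: Let G be a loopless digraph, Q a poset, and suppose the k-walks of G admit an A(Q)-coloring, where A(Q) is the poset of lower sets of Q ordered by inclusion. Then the (k+1)-walks of G admit a Q-coloring, i.e. there is a function c' from (k+1)-walks of G to Q such that for every (k+2)-walk u, c' applied to the first k+1 vertices of u is not ≤ c' applied to the last k+1 vertices of u. -/

import Mathlib

/-- A `k`-walk in the digraph `G` is a function `w : Fin k → V` such that
consecutive vertices are joined by an edge of `G`. -/
def IsWalk {V : Type*} (G : V → V → Prop) {k : ℕ} (w : Fin k → V) : Prop :=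
  ∀ i : ℕ, ∀ h : i + 1 < k, G (w ⟨i, Nat.lt_of_succ_lt h⟩) (w ⟨i + 1, h⟩)

theorem IsWalk.walkPrefix {V : Type*} {G : V → V → Prop} {k : ℕ} {u : Fin (k + 1) → V}
    (hu : IsWalk G u) : IsWalk G (fun i : Fin k => u i.castSucc) := by
  intro i h
  exact hu i (by omega)

theorem IsWalk.walkSuffix {V : Type*} {G : V → V → Prop} {k : ℕ} {u : Fin (k + 1) → V}
    (hu : IsWalk G u) : IsWalk G (fun i : Fin k => u i.succ) := by
  intro i h
  exact hu (i + 1) (by omega)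

/-- The `k`-walks of `G`, as a subtype. -/
def Walks {V : Type*} (G : V → V → Prop) (k : ℕ) : Type _ :=
  {w : Fin k → V // IsWalk G w}

/-- A `P`-coloring of the `k`-walks of `G`: for every `(k+1)`-walk `u`,
the color of its prefix `k`-walk is not `≤` the color of its suffix `k`-walk. -/
def IsPColoring {V : Type*} {P : Type*} [Preorder P] (G : V → V → Prop) (k : ℕ)
    (c : Walks G k → P) : Prop :=
  ∀ u : Walks G (k + 1),
    ¬ c ⟨fun i => u.1 i.castSucc, u.2.walkPrefix⟩ ≤ c ⟨fun i => u.1 i.succ, u.2.walkSuffix⟩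

/-- **Strengthened Expansion Theorem for distributive lattices.** If the `k`-walks of a
loopless digraph `G` admit an `A(Q)`-coloring (where `A(Q)` is the poset of lower sets of
the poset `Q`, ordered by inclusion), then the `(k+1)`-walks of `G` admit a `Q`-coloring. -/
theorem strengthened_expansion_theorem {V : Type*} (G : V → V → Prop) (hG : ∀ v, ¬ G v v)
    (Q : Type*) [PartialOrder Q] (k : ℕ) (hk : 1 ≤ k)
    (h : ∃ c : Walks G k → LowerSet Q, IsPColoring G k c) :
    ∃ c' : Walks G (k + 1) → Q, IsPColoring G (k + 1) c' := by
  classical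
  obtain ⟨c, hc⟩ := h
  have key : ∀ w : Walks G (k + 1),
      ∃ q : Q, q ∈ c ⟨fun i => w.1 i.castSucc, w.2.walkPrefix⟩ ∧
        q ∉ c ⟨fun i => w.1 i.succ, w.2.walkSuffix⟩ := by
    intro w
    have hw := hc w
    rw [← LowerSet.coe_subset_coe] at hw
    exact Set.not_subset.mp hw
  choose c' hmem hnmem using key
  refine ⟨c', ?_⟩
  intro u hle
  set w1 : Walks G (k + 1) := ⟨fun i => u.1 i.castSucc, u.2.walkPrefix⟩ with hw1
  set w2 : Walks G (k + 1) := ⟨fun i => u.1 i.succ, u.2.walkSuffix⟩ with hw2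
  have hmid : (⟨fun i => w1.1 i.succ, w1.2.walkSuffix⟩ : Walks G k)
      = ⟨fun i => w2.1 i.castSucc, w2.2.walkPrefix⟩ := by
    apply Subtype.ext
    funext i
    simp [hw1, hw2, Fin.succ_castSucc, -Fin.castSucc_succ]
  have h1 := hnmem w1
  have h2 := hmem w2
  rw [hmid] at h1
  exact h1 ((c _).lower hle h2)
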